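/- Let A be an associative Q(q)-algebra, B_i, B_j ∈ A, and Z a central element of A. With ı-divided powers of B_i defined with parameter Z (so B^{(3)}_{1̄} = B_i(B_i² − qZ)/[3]_q!, B^{(3)}_{0̄} = B_i(B_i² − [2]_q² qZ)/[3]_q!, B^{(2)}_{1̄} = (B_i² − qZ)/[2]_q, B^{(2)}_{0̄} = B_i²/[2]_q), the ıSerre relation ∑_{r=0}^{3} (−1)^r B^{(r)}_{i,0̄+p̄} B_j B^{(3−r)}_{i,p̄} = 0 for a_{ij} = −2 (for either parity p̄) is equivalent to the identity B_i³ B_j − [3]_q B_i² B_j B_i + [3]_q B_i B_j B_i² − B_j B_i³ = [2]_q² q Z (B_i B_j − B_j B_i). -/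

import Mathlib

noncomputable section

abbrev K : Type := RatFunc ℚ

/-- The indeterminate `q` in `ℚ(q)`. -/
def qq : K := RatFunc.X

/-- Balanced quantum integer at base `x`. -/
def qintx (x : K) (m : ℤ) : K := (x ^ m - x ^ (-m)) / (x - x⁻¹)

/-- Balanced quantum integer `[m]_q`. -/
def qint (m : ℤ) : K := qintx qq m

/-- Quantum factorial at base `x`. -/
def qfactx (x : K) (m : ℕ) : K := ∏ j ∈ Finset.range m, qintx x ((j : ℤ) + 1)

/-- Quantum factorial `[m]_q!`. -/
def qfact (m : ℕ) : K := qfactx qq m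

/-- Gaussian binomial coefficient at base `x` (zero when `r > m`). -/
def qbinomx (x : K) (m r : ℕ) : K :=
  if r ≤ m then qfactx x m / (qfactx x r * qfactx x (m - r)) else 0

/-- Gaussian binomial coefficient. -/
def qbinom (m r : ℕ) : K := qbinomx qq m r

/-- The ı-divided powers `B^{(m)}_{p̄}` of `B` with central parameter `Z`,
given by the closed product formulas of the paper. -/
def iDP {A : Type*} [Ring A] [Algebra K A] (B Z : A) (p : ZMod 2) (m : ℕ) : A :=
  (qfact m)⁻¹ •
    ((if m % 2 = 1 then B else 1) *
      ((List.range (m / 2)).map (fun j =>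
        B ^ 2 -
          ((qint (if p = 1 then 2 * (j : ℤ) + 1
                  else if m % 2 = 1 then 2 * (j : ℤ) + 2 else 2 * (j : ℤ))) ^ 2 * qq) • Z)).prod)

/-- The usual divided power `x^{(k)} = x^k/[k]_q!`. -/
def dp {A : Type*} [Ring A] [Algebra K A] (x : A) (k : ℕ) : A := (qfact k)⁻¹ • x ^ k


lemma qq_ne : qq ≠ 0 := RatFunc.X_ne_zero

lemma sq_ne : qq^2 - 1 ≠ 0 := by
  have h : (qq^2 - 1 : K) = algebraMap (Polynomial ℚ) K (Polynomial.X^2 - 1) := by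
    rw [map_sub, map_pow, map_one, RatFunc.algebraMap_X]; rfl
  rw [h]
  apply RatFunc.algebraMap_ne_zero
  intro h2
  have := congrArg (fun p => Polynomial.coeff p 2) h2
  simp [Polynomial.coeff_one] at this

lemma d_ne : qq - qq⁻¹ ≠ 0 := by
  have : qq - qq⁻¹ = (qq^2 - 1) / qq := by field_simp [qq_ne]
  rw [this]
  exact div_ne_zero sq_ne qq_ne

lemma qint1 : qint 1 = 1 := by
  unfold qint qintx
  simp only [zpow_one, zpow_neg, zpow_one]
  exact div_self d_ne

lemma qint0 : qint 0 = 0 := by simp [qint, qintx]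

lemma qint2 : qint 2 = qq + qq⁻¹ := by
  unfold qint qintx
  rw [div_eq_iff d_ne]
  push_cast [zpow_ofNat, zpow_neg]
  field_simp [qq_ne]
  ring

lemma qint3 : qint 3 = qq^2 + 1 + (qq^2)⁻¹ := by
  unfold qint qintx
  rw [div_eq_iff d_ne]
  push_cast [zpow_ofNat, zpow_neg]
  field_simp [qq_ne]
  ring

lemma poly_ne_aux (p : Polynomial ℚ) (n : ℕ) (h : Polynomial.coeff p n ≠ 0) :
    algebraMap (Polynomial ℚ) K p ≠ 0 := by
  apply RatFunc.algebraMap_ne_zero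
  intro h2; exact h (by rw [h2]; simp)

lemma qint2_ne : qint 2 ≠ 0 := by
  rw [qint2]
  have : qq + qq⁻¹ = (qq^2 + 1)/qq := by field_simp [qq_ne]
  rw [this]
  apply div_ne_zero _ qq_ne
  have h : (qq^2 + 1 : K) = algebraMap (Polynomial ℚ) K (Polynomial.X^2 + 1) := by
    rw [map_add, map_pow, map_one, RatFunc.algebraMap_X]; rfl
  rw [h]
  exact poly_ne_aux _ 2 (by simp [Polynomial.coeff_one])

lemma qint3_ne : qint 3 ≠ 0 := by
  rw [qint3]
  have : qq^2 + 1 + (qq^2)⁻¹ = (qq^4 + qq^2 + 1)/qq^2 := by field_simp [qq_ne]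
  rw [this]
  apply div_ne_zero _ (pow_ne_zero _ qq_ne)
  have h : (qq^4 + qq^2 + 1 : K) = algebraMap (Polynomial ℚ) K (Polynomial.X^4 + Polynomial.X^2 + 1) := by
    rw [map_add, map_add, map_pow, map_pow, map_one, RatFunc.algebraMap_X]; rfl
  rw [h]
  exact poly_ne_aux _ 4 (by simp [Polynomial.coeff_one])

lemma key31 : qint 3 + 1 = qint 2 ^ 2 := by
  rw [qint2, qint3]; field_simp [qq_ne]; ring

lemma qfact1 : qfact 1 = 1 := by
  have : qfact 1 = qint 1 := by simp [qfact, qfactx, qint, Finset.prod_range_one]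
  rw [this, qint1]

lemma qfact2 : qfact 2 = qint 2 := by
  have : qfact 2 = qint 1 * qint 2 := by
    simp [qfact, qfactx, qint, Finset.prod_range_succ]
  rw [this, qint1, one_mul]

lemma qfact3 : qfact 3 = qint 2 * qint 3 := by
  have : qfact 3 = qint 1 * qint 2 * qint 3 := by
    simp [qfact, qfactx, qint, Finset.prod_range_succ]
  rw [this, qint1, one_mul]

section iDPcalc
variable {A : Type*} [Ring A] [Algebra K A] (B Z : A) (p : ZMod 2)

lemma iDP0 : iDP B Z p 0 = 1 := by simp [iDP, qfact, qfactx]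

lemma iDP1 : iDP B Z p 1 = B := by simp [iDP, qfact1]

lemma iDP2_0 : iDP B Z 0 2 = (qint 2)⁻¹ • (B^2 - ((0:K)) • Z) := by
  simp [iDP, qfact2, List.range_succ, qint0]

lemma iDP2_1 : iDP B Z 1 2 = (qint 2)⁻¹ • (B^2 - qq • Z) := by
  simp [iDP, qfact2, List.range_succ, qint1]

lemma iDP3_0 : iDP B Z 0 3 = (qint 2 * qint 3)⁻¹ • (B * (B^2 - (qint 2 ^2 * qq) • Z)) := by
  simp [iDP, qfact3, List.range_succ]

lemma iDP3_1 : iDP B Z 1 3 = (qint 2 * qint 3)⁻¹ • (B * (B^2 - qq • Z)) := by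
  simp [iDP, qfact3, List.range_succ, qint1]

end iDPcalc

lemma core {A : Type*} [Ring A] [Algebra K A] (Bi Bj Z : A) (hZ : ∀ a : A, Z * a = a * Z)
    (a b : K) (hc : qint 3 * a + b = qint 2 ^ 2 * qq) :
    Bj * (Bi * (Bi^2 - b • Z)) - qint 3 • (Bi * Bj * (Bi^2 - a • Z))
      + qint 3 • ((Bi^2 - a • Z) * (Bj * Bi)) - (Bi * (Bi^2 - b • Z)) * Bj
    = -((Bi^3*Bj - qint 3 • (Bi^2*Bj*Bi) + qint 3 • (Bi*Bj*Bi^2) - Bj*Bi^3)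
        - ((qint 2)^2*qq) • (Z*(Bi*Bj - Bj*Bi))) := by
  have h1 : ∀ x : A, x * Z = Z * x := fun x => (hZ x).symm
  have h2 : ∀ x y : A, x * (Z * y) = Z * (x * y) := by
    intro x y; rw [← mul_assoc, h1, mul_assoc]
  simp only [mul_sub, sub_mul, smul_sub, mul_smul_comm, smul_mul_assoc, smul_smul,
    pow_succ, pow_zero, one_mul, mul_assoc, h1, h2]
  have hc2 : ∀ X : A, (qint 2 * (qint 2 * qq)) • X = (qint 3 * a) • X + b • X := by
    intro X; rw [← add_smul]; congr 1; linear_combination -hc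
  simp only [hc2]
  abel

lemma smul_cancel_eq {A : Type*} [Ring A] [Algebra K A] (c : K) (hc : c ≠ 0) (x y : A) :
    x = y ↔ c • x = c • y := by
  constructor
  · intro h; rw [h]
  · intro h
    have := congrArg (fun z => c⁻¹ • z) h
    simpa [smul_smul, inv_mul_cancel₀ hc] using this

set_option maxHeartbeats 1000000 in
lemma sum_eq {A : Type*} [Ring A] [Algebra K A] (Bi Bj Z : A) (hZ : ∀ a : A, Z * a = a * Z)
    (p : ZMod 2) :
    ∑ r ∈ Finset.range 4,
        ((-1 : K) ^ r) • (iDP Bi Z p r * Bj * iDP Bi Z p (3 - r)) =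
    (-(qint 2 * qint 3)⁻¹) •
      ((Bi ^ 3 * Bj - qint 3 • (Bi ^ 2 * Bj * Bi) + qint 3 • (Bi * Bj * Bi ^ 2) - Bj * Bi ^ 3)
        - ((qint 2) ^ 2 * qq) • (Z * (Bi * Bj - Bj * Bi))) := by
  have hw : (qint 2 * qint 3 : K) ≠ 0 := mul_ne_zero qint2_ne qint3_ne
  have hwt : (qint 2 * qint 3) * (qint 2)⁻¹ = qint 3 := by
    rw [mul_comm, ← mul_assoc, inv_mul_cancel₀ qint2_ne, one_mul]
  have hww : (qint 2 * qint 3) * (qint 2 * qint 3)⁻¹ = (1:K) := mul_inv_cancel₀ hw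
  obtain ⟨a, b, h2, h3, hc⟩ :
      ∃ a b : K, iDP Bi Z p 2 = (qint 2)⁻¹ • (Bi^2 - a • Z) ∧
        iDP Bi Z p 3 = (qint 2 * qint 3)⁻¹ • (Bi * (Bi^2 - b • Z)) ∧
        qint 3 * a + b = qint 2 ^ 2 * qq := by
    fin_cases p
    · exact ⟨0, qint 2 ^ 2 * qq, iDP2_0 Bi Z, iDP3_0 Bi Z, by ring⟩
    · exact ⟨qq, qq, iDP2_1 Bi Z, iDP3_1 Bi Z, by linear_combination key31 * qq⟩
  rw [show (4:ℕ) = 3+1 from rfl, Finset.sum_range_succ, Finset.sum_range_succ,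
    Finset.sum_range_succ, Finset.sum_range_one]
  norm_num
  rw [iDP0, iDP1, h2, h3]
  have hcore := core Bi Bj Z hZ a b hc
  calc 1 * Bj * (qint 2 * qint 3)⁻¹ • (Bi * (Bi ^ 2 - b • Z))
        + -(Bi * Bj * (qint 2)⁻¹ • (Bi ^ 2 - a • Z))
        + (qint 2)⁻¹ • (Bi ^ 2 - a • Z) * Bj * Bi
        + -((qint 2 * qint 3)⁻¹ • (Bi * (Bi ^ 2 - b • Z)) * Bj * 1)
      = (qint 2 * qint 3)⁻¹ •
          (Bj * (Bi * (Bi^2 - b • Z)) - qint 3 • (Bi * Bj * (Bi^2 - a • Z))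
            + qint 3 • ((Bi^2 - a • Z) * (Bj * Bi)) - (Bi * (Bi^2 - b • Z)) * Bj) := by
        rw [show ((qint 2)⁻¹ : K) = (qint 2 * qint 3)⁻¹ * qint 3 by
          rw [mul_inv_rev, mul_comm ((qint 3)⁻¹), mul_assoc, inv_mul_cancel₀ qint3_ne, mul_one]]
        simp only [one_mul, mul_one, mul_smul, mul_smul_comm, smul_mul_assoc, ← smul_add,
          ← smul_neg]
        congr 1
        simp only [sub_eq_add_neg, smul_mul_assoc, mul_smul_comm, mul_assoc, smul_add, smul_neg]
    _ = (qint 2 * qint 3)⁻¹ •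
          (-((Bi ^ 3 * Bj - qint 3 • (Bi ^ 2 * Bj * Bi) + qint 3 • (Bi * Bj * Bi ^ 2)
              - Bj * Bi ^ 3) - ((qint 2) ^ 2 * qq) • (Z * (Bi * Bj - Bj * Bi)))) := by
        rw [hcore]
    _ = (-(qint 2 * qint 3)⁻¹) •
          ((Bi ^ 3 * Bj - qint 3 • (Bi ^ 2 * Bj * Bi) + qint 3 • (Bi * Bj * Bi ^ 2)
              - Bj * Bi ^ 3) - ((qint 2) ^ 2 * qq) • (Z * (Bi * Bj - Bj * Bi))) := by
        rw [smul_neg, neg_smul]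
    _ = -(((qint 3)⁻¹ * (qint 2)⁻¹) •
          ((Bi ^ 3 * Bj - qint 3 • (Bi ^ 2 * Bj * Bi) + qint 3 • (Bi * Bj * Bi ^ 2)
              - Bj * Bi ^ 3) - ((qint 2) ^ 2 * qq) • (Z * (Bi * Bj - Bj * Bi)))) := by
        rw [neg_smul, mul_inv_rev]

lemma smul_cancel0 {A : Type*} [Ring A] [Algebra K A] (c : K) (hc : c ≠ 0) (x : A) :
    c • x = 0 ↔ x = 0 := by
  constructor
  · intro h
    have := congrArg (fun y => c⁻¹ • y) h
    simpa [smul_smul, inv_mul_cancel₀ hc] using this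
  · intro h; simp [h]


theorem stmt3 {A : Type*} [Ring A] [Algebra K A] (Bi Bj Z : A)
    (hZ : ∀ a : A, Z * a = a * Z) :
    (∀ p : ZMod 2, ∑ r ∈ Finset.range 4,
        ((-1 : K) ^ r) • (iDP Bi Z p r * Bj * iDP Bi Z p (3 - r)) = 0) ↔
    Bi ^ 3 * Bj - qint 3 • (Bi ^ 2 * Bj * Bi) + qint 3 • (Bi * Bj * Bi ^ 2) - Bj * Bi ^ 3 =
      ((qint 2) ^ 2 * qq) • (Z * (Bi * Bj - Bj * Bi)) := by
  have hw : (-(qint 2 * qint 3)⁻¹ : K) ≠ 0 :=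
    neg_ne_zero.mpr (inv_ne_zero (mul_ne_zero qint2_ne qint3_ne))
  constructor
  · intro h
    have h0 := h 0
    rw [sum_eq Bi Bj Z hZ 0, smul_cancel0 _ hw, sub_eq_zero] at h0
    exact h0
  · intro h p
    rw [sum_eq Bi Bj Z hZ p, smul_cancel0 _ hw, sub_eq_zero]
    exact h
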